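/- Let δ > 0, let p = (x,y) ∈ G(δ), and let x̂ ∈ B̂ with |x̂ − x| > δΛ/Λ₀, where Λ₀ = √(1+Λ²). Then f(x̂) ≤ Λ|x̂ − x| + y − Λ₀·δ. -/

import Mathlib

open Metric Set

noncomputable section

/-- `ℝ^n` with the Euclidean norm. -/
abbrev Euc (n : ℕ) := EuclideanSpace ℝ (Fin n)

/-- The space `ℝ^{d-1} × ℝ` equipped with the Euclidean (l²) product distance. -/
abbrev Pt (d : ℕ) := WithLp 2 (Euc (d - 1) × ℝ)

/-- The point `(x, y) ∈ ℝ^{d-1} × ℝ`. -/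
def toPt (d : ℕ) (x : Euc (d - 1)) (y : ℝ) : Pt d :=
  (WithLp.equiv 2 (Euc (d - 1) × ℝ)).symm (x, y)

/-- First (horizontal) component of a point of `ℝ^{d-1} × ℝ`. -/
def fstPt (d : ℕ) (p : Pt d) : Euc (d - 1) := (WithLp.equiv 2 (Euc (d - 1) × ℝ) p).1

/-- Second (vertical) component of a point of `ℝ^{d-1} × ℝ`. -/
def sndPt (d : ℕ) (p : Pt d) : ℝ := (WithLp.equiv 2 (Euc (d - 1) × ℝ) p).2

/-- `F̂`, the graph of `f` over the ball `B̂` of radius `R`. -/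
def graphF (d : ℕ) (f : Euc (d - 1) → ℝ) (R : ℝ) : Set (Pt d) :=
  (fun x => toPt d x (f x)) '' Metric.ball (0 : Euc (d - 1)) R

/-- `G(δ)`: points above the graph, over the smaller ball `B` of radius `r`, whose
Euclidean distance to the graph `F̂` equals `δ`. -/
def GSet (d : ℕ) (f : Euc (d - 1) → ℝ) (R r δ : ℝ) : Set (Pt d) :=
  { p | fstPt d p ∈ Metric.ball (0 : Euc (d - 1)) r ∧ f (fstPt d p) < sndPt d p ∧
        Metric.infDist p (graphF d f R) = δ }

/-- If `p = (x,y) ∈ G(δ)` and `xh ∈ B̂` with `‖xh - x‖ > δΛ/Λ₀`, where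
`Λ₀ = √(1+Λ²)`, then `f xh ≤ Λ‖xh - x‖ + y - Λ₀ δ`. -/
theorem graph_below_cone_far_from_level_point
    (d : ℕ) (hd : 2 ≤ d) (Λ R r : ℝ) (hΛ : 0 ≤ Λ)
    (hr : 0 < r) (hrR : r < R)
    (f : Euc (d - 1) → ℝ)
    (hf : LipschitzOnWith Λ.toNNReal f (Metric.ball (0 : Euc (d - 1)) R))
    (δ : ℝ) (hδ : 0 < δ)
    (x : Euc (d - 1)) (y : ℝ) (hp : toPt d x y ∈ GSet d f R r δ)
    (xh : Euc (d - 1)) (hxh : xh ∈ Metric.ball (0 : Euc (d - 1)) R)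
    (hfar : δ * Λ / Real.sqrt (1 + Λ ^ 2) < ‖xh - x‖) :
    f xh ≤ Λ * ‖xh - x‖ + y - Real.sqrt (1 + Λ ^ 2) * δ := by
  obtain ⟨hxr, hfxy, hinf⟩ := hp
  simp only [fstPt, sndPt, toPt, Equiv.apply_symm_apply] at hxr hfxy
  set Λ₀ := Real.sqrt (1 + Λ ^ 2) with hΛ₀def
  have hΛ₀sq : Λ₀ ^ 2 = 1 + Λ ^ 2 := Real.sq_sqrt (by positivity)
  have hΛ₀pos : 0 < Λ₀ := Real.sqrt_pos.mpr (by positivity)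
  have hΛ₀ge1 : 1 ≤ Λ₀ := by nlinarith
  set t := ‖xh - x‖ with htdef
  have ht0 : 0 < t := lt_of_le_of_lt (by positivity) hfar
  have hxR : x ∈ Metric.ball (0 : Euc (d - 1)) R :=
    Metric.ball_subset_ball hrR.le hxr
  have hdistpt : ∀ (a : Euc (d - 1)) (b : ℝ), dist (toPt d x y) (toPt d a b) =
      Real.sqrt (dist x a ^ 2 + dist y b ^ 2) :=
    fun a b => WithLp.prod_dist_eq_of_L2 _ _
  have hle : ∀ a ∈ Metric.ball (0 : Euc (d - 1)) R,
      δ ≤ dist (toPt d x y) (toPt d a (f a)) := by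
    intro a ha
    rw [← hinf]
    exact Metric.infDist_le_dist_of_mem ⟨a, ha, rfl⟩
  have hfx : f x ≤ y - δ := by
    have h1 := hle x hxR
    rw [hdistpt] at h1
    rw [show dist x x ^ 2 + dist y (f x) ^ 2 = (y - f x) ^ 2 by
      rw [dist_self, Real.dist_eq]; rw [sq_abs]; ring] at h1
    rw [Real.sqrt_sq (by linarith)] at h1
    linarith
  by_contra hcon
  push_neg at hcon
  set γ : ℝ → Euc (d - 1) := fun s => x + (s / t) • (xh - x) with hγdef
  have hγ0 : γ 0 = x := by simp [hγdef]
  have hγt : γ t = xh := by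
    simp [hγdef, div_self ht0.ne']
  have hγdist : ∀ s s' : ℝ, dist (γ s) (γ s') = |s - s'| := by
    intro s s'
    rw [dist_eq_norm]
    have h2 : γ s - γ s' = ((s - s') / t) • (xh - x) := by
      simp only [hγdef]
      module
    rw [h2, norm_smul, Real.norm_eq_abs, abs_div, abs_of_pos ht0, ← htdef]
    field_simp
  have hγmem : ∀ s ∈ Icc (0 : ℝ) t, γ s ∈ Metric.ball (0 : Euc (d - 1)) R := by
    intro s hs
    have h1 : γ s = (1 - s / t) • x + (s / t) • xh := by
      simp only [hγdef]; module
    have hst : s / t ≤ 1 := (div_le_one ht0).mpr hs.2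
    rw [h1]
    exact convex_ball (0 : Euc (d - 1)) R hxR hxh (by linarith)
      (div_nonneg hs.1 ht0.le) (by ring)
  have hLip : ∀ s ∈ Icc (0 : ℝ) t, ∀ s' ∈ Icc (0 : ℝ) t,
      |f (γ s) - f (γ s')| ≤ Λ * |s - s'| := by
    intro s hs s' hs'
    have h1 := hf.dist_le_mul _ (hγmem s hs) _ (hγmem s' hs')
    rw [Real.dist_eq, hγdist, Real.coe_toNNReal _ hΛ] at h1
    exact h1
  set s₀ := δ * Λ / Λ₀ with hs₀def
  have hs₀0 : 0 ≤ s₀ := by positivity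
  have hs₀t : s₀ < t := hfar
  have hΛs₀ : Λ * s₀ - Λ₀ * δ = -(δ / Λ₀) := by
    rw [hs₀def]
    field_simp
    linear_combination (-1) * hΛ₀sq
  have hkey : y - δ / Λ₀ < f (γ s₀) := by
    have h1 := hLip t ⟨ht0.le, le_refl t⟩ s₀ ⟨hs₀0, hs₀t.le⟩
    rw [hγt, abs_of_nonneg (show (0:ℝ) ≤ t - s₀ by linarith)] at h1
    have h2 : f xh - f (γ s₀) ≤ Λ * (t - s₀) := (abs_le.mp h1).2
    nlinarith [hcon, hΛs₀]
  have hcont : ContinuousOn (fun s => f (γ s)) (Icc (0 : ℝ) t) := by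
    apply hf.continuousOn.comp _ hγmem
    exact (Continuous.continuousOn (by fun_prop))
  have hivt : (y - δ / Λ₀) ∈ (fun s => f (γ s)) '' Icc 0 s₀ := by
    apply intermediate_value_Icc hs₀0
      (hcont.mono (Icc_subset_Icc le_rfl hs₀t.le))
    constructor
    · rw [hγ0]
      have : δ / Λ₀ ≤ δ := div_le_self hδ.le hΛ₀ge1
      linarith
    · exact hkey.le
  obtain ⟨s₁, hs₁mem, hs₁⟩ := hivt
  have hs₁lt : s₁ < s₀ := lt_of_le_of_ne hs₁mem.2 (by
    intro h
    rw [h] at hs₁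
    simp only at hs₁
    linarith [hkey])
  have hq : toPt d (γ s₁) (f (γ s₁)) ∈ graphF d f R :=
    ⟨γ s₁, hγmem s₁ ⟨hs₁mem.1, by linarith⟩, rfl⟩
  have hdlt : dist (toPt d x y) (toPt d (γ s₁) (f (γ s₁))) < δ := by
    rw [hdistpt]
    have hd1 : dist x (γ s₁) = s₁ := by
      rw [← hγ0, hγdist]
      rw [abs_of_nonpos (by linarith [hs₁mem.1])]
      ring
    have hd2 : dist y (f (γ s₁)) = δ / Λ₀ := by
      simp only at hs₁
      rw [Real.dist_eq, hs₁, abs_of_nonneg (by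
        have := div_nonneg hδ.le hΛ₀pos.le; linarith)]
      ring
    rw [hd1, hd2]
    have hs₁sq : s₁ ^ 2 < s₀ ^ 2 := by nlinarith [hs₁mem.1]
    have esum : s₀ ^ 2 + (δ / Λ₀) ^ 2 = δ ^ 2 := by
      rw [hs₀def]
      field_simp
      linear_combination (-1) * hΛ₀sq
    have harg : s₁ ^ 2 + (δ / Λ₀) ^ 2 < δ ^ 2 := by linarith
    have h5 := Real.sqrt_lt_sqrt (by positivity) harg
    rwa [Real.sqrt_sq hδ.le] at h5
  have hfin := Metric.infDist_le_dist_of_mem (x := toPt d x y) hq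
  rw [hinf] at hfin
  linarith
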